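/- Fix a positive integer n and a vector s ∈ ℝⁿ. For every pair of real symmetric positive semidefinite n×n matrices L₁, L₂ and every λ ∈ [0,1], it holds that sᵀ(I + λL₁ + (1−λ)L₂)⁻¹ s ≤ λ·sᵀ(I + L₁)⁻¹ s + (1−λ)·sᵀ(I + L₂)⁻¹ s. In other words, the PD-Undir objective L ↦ sᵀ(I + L)⁻¹ s is convex on the cone of symmetric positive semidefinite matrices. -/

import Mathlib

open Matrix

private lemma psd_smul_aux {n : ℕ} {c : ℝ} (hc : 0 ≤ c) {M : Matrix (Fin n) (Fin n) ℝ}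
    (hM : M.PosSemidef) : (c • M).PosSemidef := by
  rw [posSemidef_iff_dotProduct_mulVec] at hM ⊢
  refine ⟨?_, fun x => ?_⟩
  · unfold Matrix.IsHermitian
    rw [conjTranspose_smul, hM.1]
    simp
  · rw [smul_mulVec, dotProduct_smul]
    have := hM.2 x
    rw [smul_eq_mul]
    exact mul_nonneg hc this

/-- For a symmetric positive definite real matrix `X`, the quadratic lower bound
`2 ⟨s, y⟩ - ⟨y, X y⟩ ≤ ⟨s, X⁻¹ s⟩` holds for every `y`. -/
private lemma key_ineq {n : ℕ} (s : Fin n → ℝ) {X : Matrix (Fin n) (Fin n) ℝ}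
    (hX : X.PosDef) (y : Fin n → ℝ) :
    2 * (s ⬝ᵥ y) - y ⬝ᵥ X.mulVec y ≤ s ⬝ᵥ X⁻¹.mulVec s := by
  set w : Fin n → ℝ := X⁻¹.mulVec s with hw
  have hXw : X.mulVec w = s := by
    rw [hw, mulVec_mulVec, Matrix.mul_nonsing_inv _ (isUnit_iff_ne_zero.mpr hX.det_pos.ne'),
      one_mulVec]
  have hsym : Xᵀ = X := by
    have := hX.isHermitian
    exact isHermitian_iff_isSymm.mp this
  have h0 : 0 ≤ (y - w) ⬝ᵥ X.mulVec (y - w) := by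
    have := hX.posSemidef.dotProduct_mulVec_nonneg (y - w)
    simpa using this
  have hwXy : w ⬝ᵥ X.mulVec y = s ⬝ᵥ y := by
    rw [dotProduct_mulVec, ← mulVec_transpose, hsym, hXw]
  have hyXw : y ⬝ᵥ X.mulVec w = y ⬝ᵥ s := by rw [hXw]
  have hwXw : w ⬝ᵥ X.mulVec w = w ⬝ᵥ s := by rw [hXw]
  have hexp : (y - w) ⬝ᵥ X.mulVec (y - w)
      = y ⬝ᵥ X.mulVec y - y ⬝ᵥ s - s ⬝ᵥ y + w ⬝ᵥ s := by
    rw [mulVec_sub, dotProduct_sub, sub_dotProduct, sub_dotProduct, hwXy, hyXw, hwXw]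
    ring
  have hcomm : y ⬝ᵥ s = s ⬝ᵥ y := dotProduct_comm y s
  have hws : w ⬝ᵥ s = s ⬝ᵥ w := dotProduct_comm w s
  rw [hexp, hcomm, hws] at h0
  linarith

/-- Convexity of the PD-Undir objective `L ↦ sᵀ (I + L)⁻¹ s` on the cone of symmetric
positive semidefinite matrices. -/
theorem pdUndir_convex {n : ℕ} (hn : 0 < n) (s : Fin n → ℝ)
    (L1 L2 : Matrix (Fin n) (Fin n) ℝ) (h1 : L1.PosSemidef) (h2 : L2.PosSemidef)
    (t : ℝ) (ht0 : 0 ≤ t) (ht1 : t ≤ 1) :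
    s ⬝ᵥ ((1 + (t • L1 + (1 - t) • L2))⁻¹).mulVec s ≤
      t * (s ⬝ᵥ ((1 + L1)⁻¹).mulVec s) + (1 - t) * (s ⬝ᵥ ((1 + L2)⁻¹).mulVec s) := by
  have ht1' : 0 ≤ 1 - t := by linarith
  have hpsd : (t • L1 + (1 - t) • L2).PosSemidef :=
    (psd_smul_aux ht0 h1).add (psd_smul_aux ht1' h2)
  have hXt : (1 + (t • L1 + (1 - t) • L2)).PosDef := Matrix.PosDef.add_posSemidef .one hpsd
  have hX1 : (1 + L1).PosDef := Matrix.PosDef.add_posSemidef .one h1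
  have hX2 : (1 + L2).PosDef := Matrix.PosDef.add_posSemidef .one h2
  set Xt := 1 + (t • L1 + (1 - t) • L2) with hXtdef
  set y : Fin n → ℝ := Xt⁻¹.mulVec s with hy
  have hXty : Xt.mulVec y = s := by
    rw [hy, mulVec_mulVec, Matrix.mul_nonsing_inv _ (isUnit_iff_ne_zero.mpr hXt.det_pos.ne'),
      one_mulVec]
  -- Xt = t • (1 + L1) + (1 - t) • (1 + L2)
  have hsplit : Xt = t • (1 + L1) + (1 - t) • (1 + L2) := by
    rw [hXtdef, smul_add, smul_add]
    have : t • (1 : Matrix (Fin n) (Fin n) ℝ) + (1 - t) • (1 : Matrix (Fin n) (Fin n) ℝ)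
        = 1 := by rw [← add_smul]; simp
    rw [show t • (1 : Matrix (Fin n) (Fin n) ℝ) + t • L1 + ((1 - t) • 1 + (1 - t) • L2)
        = (t • (1 : Matrix (Fin n) (Fin n) ℝ) + (1 - t) • 1) + (t • L1 + (1 - t) • L2) by abel,
      this]
  have hLHS : s ⬝ᵥ Xt⁻¹.mulVec s
      = t * (2 * (s ⬝ᵥ y) - y ⬝ᵥ (1 + L1).mulVec y)
        + (1 - t) * (2 * (s ⬝ᵥ y) - y ⬝ᵥ (1 + L2).mulVec y) := by
    have hq : y ⬝ᵥ Xt.mulVec y = s ⬝ᵥ y := by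
      rw [hXty]; exact dotProduct_comm y s
    have hq2 : y ⬝ᵥ Xt.mulVec y
        = t * (y ⬝ᵥ (1 + L1).mulVec y) + (1 - t) * (y ⬝ᵥ (1 + L2).mulVec y) := by
      rw [hsplit, add_mulVec, dotProduct_add, smul_mulVec, smul_mulVec,
        dotProduct_smul, dotProduct_smul]
      simp [smul_eq_mul]
    have : s ⬝ᵥ Xt⁻¹.mulVec s = s ⬝ᵥ y := by rw [hy]
    rw [this]
    have := hq2.symm.trans hq
    linarith
  rw [hLHS]
  have b1 := key_ineq s hX1 y
  have b2 := key_ineq s hX2 y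
  have := mul_le_mul_of_nonneg_left b1 ht0
  have := mul_le_mul_of_nonneg_left b2 ht1'
  linarith
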